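/- arXiv:1705.05564 — 2 statements merged into one kernel-verified Lean document; each statement's English description precedes it below -/
import Mathlib

section
/- With X a non-complete θ-invariant code, y ∉ F(X*) with distinct first/last letters and |y| ≥ 2, z = ā^{|y|} y a^{|y|}, and Z = {θⁱ(z) : i ∈ ℤ}: the set X* Z is a prefix code, i.e., no word x₁z₁ with x₁ ∈ X*, z₁ ∈ Z is a proper prefix of another word x₂z₂ with x₂ ∈ X*, z₂ ∈ Z. -/
open List

variable {α : Type*}

/-- The submonoid (as a set) generated by `X`: all concatenations of words of `X`. -/
def StarSet (X : Set (List α)) : Set (List α) :=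
  {w | ∃ l : List (List α), (∀ u ∈ l, u ∈ X) ∧ l.flatten = w}

/-- `X` is a (variable-length) code: unique factorization over `X`. -/
def IsCode (X : Set (List α)) : Prop :=
  ∀ l m : List (List α), (∀ u ∈ l, u ∈ X) → (∀ u ∈ m, u ∈ X) →
    l.flatten = m.flatten → l = m

def Factor (u w : List α) : Prop := ∃ p s, p ++ u ++ s = w

def Factors (S : Set (List α)) : Set (List α) := {u | ∃ w ∈ S, Factor u w}

def Complete (X : Set (List α)) : Prop := Factors (StarSet X) = Set.univ

def Thin (X : Set (List α)) : Prop := Factors X ≠ Set.univ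

def Invariant (θ : List α → List α) (X : Set (List α)) : Prop := θ '' X = X

def IsSubmonoidSet (M : Set (List α)) : Prop :=
  [] ∈ M ∧ ∀ u ∈ M, ∀ v ∈ M, u ++ v ∈ M

/-- Stability (equidivisibility) condition, characterizing free submonoids of `A*`. -/
def Stable (M : Set (List α)) : Prop :=
  ∀ u v w, u ∈ M → u ++ v ∈ M → w ∈ M → v ++ w ∈ M → v ∈ M

def FreeSubmonoid (M : Set (List α)) : Prop := IsSubmonoidSet M ∧ Stable M

/-- Minimal generating set of a submonoid: `(M \ {ε}) \ (M \ {ε})²`. -/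
def MinGen (M : Set (List α)) : Set (List α) :=
  {w | w ∈ M ∧ w ≠ [] ∧
    ¬ ∃ u v, u ∈ M ∧ v ∈ M ∧ u ≠ [] ∧ v ≠ [] ∧ u ++ v = w}

def IsMorphism (θ : List α → List α) : Prop :=
  ∀ u v, θ (u ++ v) = θ u ++ θ v

def IsAntimorphism (θ : List α → List α) : Prop :=
  θ [] = [] ∧ ∀ u v, θ (u ++ v) = θ v ++ θ u

/-- `θ` is literal: the image of a letter is a letter. -/
def Literal (θ : List α → List α) : Prop := ∀ a : α, ∃ b : α, θ [a] = [b]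

/-- `θ` is a bijective literal (anti)morphism of the free monoid. -/
def LitAnti (θ : List α → List α) : Prop :=
  Function.Bijective θ ∧ Literal θ ∧ (IsMorphism θ ∨ IsAntimorphism θ)

/-- The set `{θ^i z : i ∈ ℤ}` for a bijective `θ` (negative powers are
captured by `θ^[i] w = z`). -/
def OrbitZ (θ : List α → List α) (z : List α) : Set (List α) :=
  {w | ∃ i : ℕ, θ^[i] z = w ∨ θ^[i] w = z}

def IsPrefixCode (X : Set (List α)) : Prop :=
  [] ∉ X ∧ ∀ x ∈ X, ∀ u, x ++ u ∈ X → u = []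

def IsSuffixCode (X : Set (List α)) : Prop :=
  [] ∉ X ∧ ∀ x ∈ X, ∀ u, u ++ x ∈ X → u = []

/-- `X^k`: products of exactly `k` words of `X`. -/
def PowSet (X : Set (List α)) (k : ℕ) : Set (List α) :=
  {w | ∃ l : List (List α), l.length = k ∧ (∀ u ∈ l, u ∈ X) ∧ l.flatten = w}

/-- Circular code: `x₁⋯xₘ = s·y₂⋯yₙ·p` with `y₁ = ps ∈ X`, `s ≠ ε`
forces `m = n`, `p = ε` and `xᵢ = yᵢ`. -/
def IsCircularCode (X : Set (List α)) : Prop :=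
  ∀ (l ys : List (List α)) (p s : List α),
    (∀ u ∈ l, u ∈ X) → p ++ s ∈ X → (∀ u ∈ ys, u ∈ X) → s ≠ [] →
    l.flatten = s ++ ys.flatten ++ p → l = (p ++ s) :: ys ∧ p = []

/-- A word is overlapping-free if no proper nonempty prefix equals a suffix. -/
def OverlapFree (w : List α) : Prop :=
  ¬ ∃ u v : List α, u ≠ [] ∧ u.length ≤ w.length - 1 ∧ u ++ w = w ++ v

/-- `X` is a regular (rational) language: accepted by a finite automaton. -/
def IsRegularSet (X : Set (List α)) : Prop :=
  ∃ (σ : Type) (_ : Fintype σ) (M : DFA α σ), M.accepts = X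

lemma la_nil {θ : List α → List α} (hθ : LitAnti θ) : θ [] = [] := by
  rcases hθ.2.2 with hm | hA
  · have h := hm [] []
    simp only [List.append_nil] at h
    have h2 := congrArg List.length h
    simp only [List.length_append] at h2
    have : (θ []).length = 0 := by omega
    exact List.eq_nil_of_length_eq_zero this
  · exact hA.1

lemma la_length {θ : List α → List α} (hθ : LitAnti θ) : ∀ w, (θ w).length = w.length := by
  intro w
  induction w with
  | nil => simp [la_nil hθ]
  | cons a w ih =>
    obtain ⟨b, hb⟩ := hθ.2.1 a
    rcases hθ.2.2 with hm | hA
    · have h : θ (a :: w) = θ [a] ++ θ w := by rw [← hm]; rfl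
      rw [h, hb]; simp [ih]
    · have h : θ (a :: w) = θ w ++ θ [a] := by rw [← hA.2]; rfl
      rw [h, hb]; simp [ih]

lemma la_replicate {θ : List α → List α} (hθ : LitAnti θ) (n : ℕ) (p b : α)
    (hb : θ [p] = [b]) : θ (replicate n p) = replicate n b := by
  induction n with
  | zero => simpa using la_nil hθ
  | succ n ih =>
    rcases hθ.2.2 with hm | hA
    · rw [replicate_succ, show (p :: replicate n p) = [p] ++ replicate n p from rfl,
        hm, hb, ih]; rfl
    · rw [replicate_succ, show (p :: replicate n p) = [p] ++ replicate n p from rfl,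
        hA.2, hb, ih, ← replicate_succ']

lemma star_nil {X : Set (List α)} : ([] : List α) ∈ StarSet X := ⟨[], by simp, rfl⟩

lemma star_append {X : Set (List α)} {u v : List α} (hu : u ∈ StarSet X)
    (hv : v ∈ StarSet X) : u ++ v ∈ StarSet X := by
  obtain ⟨l, hl, rfl⟩ := hu
  obtain ⟨m, hm, rfl⟩ := hv
  exact ⟨l ++ m, by intro w hw; rcases List.mem_append.1 hw with h | h; exacts [hl w h, hm w h],
    by simp⟩

lemma mem_star {X : Set (List α)} {u : List α} (hu : u ∈ X) : u ∈ StarSet X :=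
  ⟨[u], by simpa, by simp⟩

lemma la_star {θ : List α → List α} (hθ : LitAnti θ) {X : Set (List α)}
    (hinv : Invariant θ X) : ∀ w ∈ StarSet X, θ w ∈ StarSet X := by
  rintro w ⟨l, hl, rfl⟩
  induction l with
  | nil => simpa [la_nil hθ] using (star_nil : ([] : List α) ∈ StarSet X)
  | cons u l ih =>
    have hu : θ u ∈ X := by
      rw [← hinv]; exact ⟨u, hl u (by simp), rfl⟩
    have hl' : θ l.flatten ∈ StarSet X := ih (fun v hv => hl v (by simp [hv]))
    have hj : (u :: l).flatten = u ++ l.flatten := rfl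
    rcases hθ.2.2 with hm | hA
    · rw [hj, hm]; exact star_append (mem_star hu) hl'
    · rw [hj, hA.2]; exact star_append hl' (mem_star hu)

lemma la_factor {θ : List α → List α} (hθ : LitAnti θ) {u w : List α}
    (h : Factor u w) : Factor (θ u) (θ w) := by
  obtain ⟨p, s, rfl⟩ := h
  rcases hθ.2.2 with hm | hA
  · exact ⟨θ p, θ s, by rw [← hm, ← hm]⟩
  · refine ⟨θ s, θ p, ?_⟩
    rw [show p ++ u ++ s = (p ++ u) ++ s from rfl, hA.2, hA.2]
    simp [List.append_assoc]

lemma la_factors {θ : List α → List α} (hθ : LitAnti θ) {X : Set (List α)}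
    (hinv : Invariant θ X) {u : List α} (h : u ∈ Factors (StarSet X)) :
    θ u ∈ Factors (StarSet X) := by
  obtain ⟨w, hw, hf⟩ := h
  exact ⟨θ w, la_star hθ hinv w hw, la_factor hθ hf⟩

lemma la_inv {θ : List α → List α} (hθ : LitAnti θ) {X : Set (List α)}
    (hinv : Invariant θ X) :
    ∃ ψ : List α → List α, LitAnti ψ ∧ Invariant ψ X ∧ ∀ w, ψ (θ w) = w := by
  classical
  have hne : Nonempty (List α) := ⟨[]⟩
  set ψ := Function.invFun θ with hψ
  have hli : Function.LeftInverse ψ θ := Function.leftInverse_invFun hθ.1.1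
  have hri : Function.RightInverse ψ θ := Function.rightInverse_invFun hθ.1.2
  have hinj : Function.Injective ψ := fun a b h => by
    have := congrArg θ h; rwa [hri, hri] at this
  have hsurj : Function.Surjective ψ := hli.surjective
  have hlit : Literal ψ := by
    intro b
    obtain ⟨w, hw⟩ := hθ.1.2 [b]
    have hw1 : w.length = 1 := by
      have := la_length hθ w; rw [hw] at this; simpa using this.symm
    obtain ⟨c, rfl⟩ := List.length_eq_one_iff.1 hw1
    exact ⟨c, by rw [← hw, hli]⟩
  have hmor : IsMorphism ψ ∨ IsAntimorphism ψ := by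
    rcases hθ.2.2 with hm | hA
    · left
      intro u v
      apply hθ.1.1
      rw [hri, hm, hri, hri]
    · right
      constructor
      · apply hθ.1.1; rw [hri, hA.1]
      · intro u v
        apply hθ.1.1
        rw [hri, hA.2, hri, hri]
  have hinvψ : Invariant ψ X := by
    ext w
    constructor
    · rintro ⟨v, hv, rfl⟩
      rw [← hinv] at hv
      obtain ⟨v', hv', rfl⟩ := hv
      rwa [hli]
    · intro hw
      refine ⟨θ w, ?_, hli w⟩
      rw [← hinv]; exact ⟨w, hw, rfl⟩
  exact ⟨ψ, ⟨⟨hinj, hsurj⟩, hlit, hmor⟩, hinvψ, hli⟩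

def GoodWord (X : Set (List α)) (n : ℕ) (w : List α) : Prop :=
  ∃ (p q c d : α) (t : List α), c ≠ p ∧ d ≠ q ∧ c ≠ d ∧ t.length + 2 = n ∧
    ([c] ++ t ++ [d]) ∉ Factors (StarSet X) ∧
    w = replicate n p ++ ([c] ++ t ++ [d]) ++ replicate n q

lemma good_step {θ : List α → List α} (hθ : LitAnti θ) {X : Set (List α)}
    (hinv : Invariant θ X) {n : ℕ} {w : List α} (hg : GoodWord X n w) :
    GoodWord X n (θ w) := by
  obtain ⟨ψ, hψ, hψX, hψθ⟩ := la_inv hθ hinv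
  obtain ⟨p, q, c, d, t, hcp, hdq, hcd, hlen, hF, rfl⟩ := hg
  obtain ⟨p', hp'⟩ := hθ.2.1 p
  obtain ⟨q', hq'⟩ := hθ.2.1 q
  obtain ⟨c', hc'⟩ := hθ.2.1 c
  obtain ⟨d', hd'⟩ := hθ.2.1 d
  have hinj : ∀ a b : α, θ [a] = θ [b] → a = b := by
    intro a b h
    have := hθ.1.1 h
    simpa using this
  have hcp' : c' ≠ p' := fun h => hcp (hinj _ _ (by rw [hc', hp', h]))
  have hdq' : d' ≠ q' := fun h => hdq (hinj _ _ (by rw [hd', hq', h]))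
  have hcd' : c' ≠ d' := fun h => hcd (hinj _ _ (by rw [hc', hd', h]))
  have htl : (θ t).length + 2 = n := by rw [la_length hθ]; exact hlen
  rcases hθ.2.2 with hm | hA
  · have hmid : θ ([c] ++ t ++ [d]) = [c'] ++ θ t ++ [d'] := by
      rw [hm, hm, hc', hd']
    refine ⟨p', q', c', d', θ t, hcp', hdq', hcd', htl, ?_, ?_⟩
    · intro hmem
      apply hF
      have h2 := la_factors hψ hψX hmem
      rwa [← hmid, hψθ] at h2
    · rw [hm, hm, la_replicate hθ n p p' hp', la_replicate hθ n q q' hq', hmid]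
  · have hmid : θ ([c] ++ t ++ [d]) = [d'] ++ θ t ++ [c'] := by
      rw [show [c] ++ t ++ [d] = ([c] ++ t) ++ [d] from rfl, hA.2, hA.2, hc', hd']
      simp
    refine ⟨q', p', d', c', θ t, hdq', hcp', fun h => hcd' h.symm, htl, ?_, ?_⟩
    · intro hmem
      apply hF
      have h2 := la_factors hψ hψX hmem
      rwa [← hmid, hψθ] at h2
    · rw [hA.2, hA.2, la_replicate hθ n p p' hp', la_replicate hθ n q q' hq', hmid]
      simp [List.append_assoc]

lemma good_iterate {θ : List α → List α} (hθ : LitAnti θ) {X : Set (List α)}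
    (hinv : Invariant θ X) {n : ℕ} (i : ℕ) {w : List α} (hg : GoodWord X n w) :
    GoodWord X n (θ^[i] w) := by
  induction i with
  | zero => simpa using hg
  | succ i ih => rw [Function.iterate_succ_apply']; exact good_step hθ hinv ih

lemma good_orbit {θ : List α → List α} (hθ : LitAnti θ) {X : Set (List α)}
    (hinv : Invariant θ X) {n : ℕ} {z w : List α} (hgz : GoodWord X n z)
    (hw : w ∈ OrbitZ θ z) : GoodWord X n w := by
  obtain ⟨i, h | h⟩ := hw
  · rw [← h]; exact good_iterate hθ hinv i hgz
  · obtain ⟨ψ, hψ, hψX, hψθ⟩ := la_inv hθ hinv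
    have h2 : ψ^[i] (θ^[i] w) = w := Function.LeftInverse.iterate hψθ i w
    rw [← h2, h]
    exact good_iterate hψ hψX i hgz

lemma trip_low {n : ℕ} {p q : α} {m : List α} (hm : m.length = n)
    {j : ℕ} (hj : j < n)
    (hb : j < (replicate n p ++ m ++ replicate n q).length) :
    (replicate n p ++ m ++ replicate n q)[j] = p := by
  rw [List.getElem_append_left (by simp [hm]; omega),
      List.getElem_append_left (by simp; omega), List.getElem_replicate]

lemma trip_mid {n : ℕ} {p q : α} {m : List α} (hm : m.length = n)
    {j : ℕ} (hj1 : n ≤ j) (hj2 : j < 2 * n)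
    (hb : j < (replicate n p ++ m ++ replicate n q).length) :
    (replicate n p ++ m ++ replicate n q)[j] = m[j - n]'(by omega) := by
  rw [List.getElem_append_left (by simp [hm]; omega),
      List.getElem_append_right (by simp; omega)]
  simp

lemma trip_high {n : ℕ} {p q : α} {m : List α} (hm : m.length = n)
    {j : ℕ} (hj1 : 2 * n ≤ j) (hj2 : j < 3 * n)
    (hb : j < (replicate n p ++ m ++ replicate n q).length) :
    (replicate n p ++ m ++ replicate n q)[j] = q := by
  rw [List.getElem_append_right (by simp [hm]; omega), List.getElem_replicate]

lemma mid_first {c d : α} {t : List α} (hb : 0 < ([c] ++ t ++ [d]).length) :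
    ([c] ++ t ++ [d])[0] = c := rfl

lemma mid_last {c d : α} {t : List α}
    (hb : t.length + 1 < ([c] ++ t ++ [d]).length) :
    ([c] ++ t ++ [d])[t.length + 1] = d := by
  rw [List.getElem_append_right (by simp)]
  simp

lemma mid_first' {c d : α} {t m : List α} (hm : m = [c] ++ t ++ [d])
    (hb : 0 < m.length) : m[0] = c := by subst hm; rfl

lemma mid_last' {c d : α} {t m : List α} (hm : m = [c] ++ t ++ [d])
    (hb : t.length + 1 < m.length) : m[t.length + 1] = d := by
  subst hm; exact mid_last hb

lemma gci {l : List α} {i j : ℕ} (h : i = j) {hi : i < l.length} :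
    l[i] = l[j]'(h ▸ hi) := by subst h; rfl

theorem stmt7 (θ : List α → List α) (hθ : LitAnti θ)
    (X : Set (List α)) (hcode : IsCode X) (hinv : Invariant θ X)
    (a ab : α) (ha : a ≠ ab) (x y z : List α)
    (hy : y = [a] ++ x ++ [ab]) (hyF : y ∉ Factors (StarSet X))
    (hz : z = List.replicate y.length ab ++ y ++ List.replicate y.length a) :
    ∀ x₁ ∈ StarSet X, ∀ x₂ ∈ StarSet X, ∀ z₁ ∈ OrbitZ θ z, ∀ z₂ ∈ OrbitZ θ z,
      ∀ u : List α, x₁ ++ z₁ ++ u = x₂ ++ z₂ → u = [] := by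
  intro x₁ hx₁ x₂ hx₂ z₁ hz₁ z₂ hz₂ u heq
  by_contra hu
  set n := y.length with hn
  have hn2 : 2 ≤ n := by rw [hn, hy]; simp
  have hgz : GoodWord X n z := by
    refine ⟨ab, a, a, ab, x, ha, fun h => ha h.symm, ha, ?_, ?_, ?_⟩
    · rw [hn, hy]; simp
    · rw [← hy]; exact hyF
    · rw [hz, hy]
  have hg1 := good_orbit hθ hinv hgz hz₁
  have hg2 := good_orbit hθ hinv hgz hz₂
  obtain ⟨p₁, q₁, c₁, d₁, t₁, hc₁p, hd₁q, hc₁d, ht₁, hF₁, hw₁⟩ := hg1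
  obtain ⟨p₂, q₂, c₂, d₂, t₂, hc₂p, hd₂q, hc₂d, ht₂, hF₂, hw₂⟩ := hg2
  set m₁ := [c₁] ++ t₁ ++ [d₁] with hm₁def
  set m₂ := [c₂] ++ t₂ ++ [d₂] with hm₂def
  have hm₁l : m₁.length = n := by rw [hm₁def]; simp; omega
  have hm₂l : m₂.length = n := by rw [hm₂def]; simp; omega
  subst hw₁
  subst hw₂
  have hlz₁ : (replicate n p₁ ++ m₁ ++ replicate n q₁).length = 3 * n := by
    simp [hm₁l]; omega
  have hlz₂ : (replicate n p₂ ++ m₂ ++ replicate n q₂).length = 3 * n := by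
    simp [hm₂l]; omega
  have hul : 0 < u.length := List.length_pos_iff.2 hu
  have heq' : x₁ ++ ((replicate n p₁ ++ m₁ ++ replicate n q₁) ++ u)
      = x₂ ++ (replicate n p₂ ++ m₂ ++ replicate n q₂) := by
    simpa [List.append_assoc] using heq
  rcases List.append_eq_append_iff.1 heq' with ⟨v, hx2v, hcore⟩ | ⟨v, hx1v, hz2v⟩
  swap
  · have h2 := congrArg List.length hz2v
    simp [hm₁l, hm₂l] at h2
    omega
  have hvlen : v.length = u.length := by
    have h2 := congrArg List.length hcore
    simp [hm₁l, hm₂l] at h2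
    omega
  set e := v.length with he
  have he0 : 0 < e := by omega
  have key : ∀ j (hj : j < 3*n) (hej : e + j < 3*n),
      (replicate n p₂ ++ m₂ ++ replicate n q₂)[j]'(lt_of_lt_of_eq hj hlz₂.symm) =
      (replicate n p₁ ++ m₁ ++ replicate n q₁)[e + j]'(lt_of_lt_of_eq hej hlz₁.symm) := by
    intro j hj hej
    have hb1 : e + j < ((replicate n p₁ ++ m₁ ++ replicate n q₁) ++ u).length := by
      rw [List.length_append, hlz₁]; omega
    have e1 : ((replicate n p₁ ++ m₁ ++ replicate n q₁) ++ u)[e + j]'hb1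
        = (replicate n p₁ ++ m₁ ++ replicate n q₁)[e + j]'(lt_of_lt_of_eq hej hlz₁.symm) :=
      List.getElem_append_left _
    have hb2 : e + j < (v ++ (replicate n p₂ ++ m₂ ++ replicate n q₂)).length := by
      rw [← hcore]; exact hb1
    have e0 : ((replicate n p₁ ++ m₁ ++ replicate n q₁) ++ u)[e + j]'hb1
        = (v ++ (replicate n p₂ ++ m₂ ++ replicate n q₂))[e + j]'hb2 := by
      congr 1
    have e2 : (v ++ (replicate n p₂ ++ m₂ ++ replicate n q₂))[e + j]'hb2
        = (replicate n p₂ ++ m₂ ++ replicate n q₂)[e + j - v.length]'(by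
            rw [hlz₂]; omega) :=
      List.getElem_append_right (by omega)
    have eidx : e + j - v.length = j := by omega
    rw [← e1, e0, e2, gci eidx]
  have hcase : 2*n ≤ e ∨ (n < e ∧ e < 2*n) ∨ e = n ∨ (0 < e ∧ e < n) := by omega
  rcases hcase with hA | hB | hC | hD
  · -- m₁ is a factor of x₂
    have hcore' : (replicate n p₁ ++ m₁) ++ (replicate n q₁ ++ u)
        = v ++ (replicate n p₂ ++ m₂ ++ replicate n q₂) := by
      simpa [List.append_assoc] using hcore
    rcases List.append_eq_append_iff.1 hcore' with ⟨a', hva, _⟩ | ⟨c', hvc, _⟩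
    · exact hF₁ ⟨x₂, hx₂, x₁ ++ replicate n p₁, a',
        by rw [hx2v, hva]; simp [List.append_assoc]⟩
    · have hlc : c'.length = 0 := by
        have h2 := congrArg List.length hvc
        simp [hm₁l] at h2
        omega
      rw [List.eq_nil_of_length_eq_zero hlc, List.append_nil] at hvc
      exact hF₁ ⟨x₂, hx₂, x₁ ++ replicate n p₁, [],
        by rw [hx2v, ← hvc]; simp [List.append_assoc]⟩
  · -- n < e < 2n
    have kn := key n (by omega) (by omega)
    rw [trip_mid hm₂l (le_refl n) (by omega), gci (show n - n = 0 by omega),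
      trip_high hm₁l (by omega) (by omega)] at kn
    have km := key (n-1) (by omega) (by omega)
    rw [trip_low hm₂l (by omega), trip_high hm₁l (by omega) (by omega)] at km
    rw [mid_first' hm₂def] at kn
    exact hc₂p (kn.trans km.symm)
  · -- e = n
    have k0 := key 0 (by omega) (by omega)
    rw [trip_low hm₂l (by omega), gci (show e + 0 = n by omega),
      trip_mid hm₁l (le_refl n) (by omega), gci (show n - n = 0 by omega)] at k0
    rw [mid_first' hm₁def] at k0
    have k1 := key (n-1) (by omega) (by omega)
    rw [trip_low hm₂l (by omega), gci (show e + (n-1) = n + (n-1) by omega),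
      trip_mid hm₁l (by omega) (by omega),
      gci (show n + (n-1) - n = t₁.length + 1 by omega)] at k1
    rw [mid_last' hm₁def] at k1
    exact hc₁d (k0.symm.trans k1)
  · -- 0 < e < n
    have ka := key (2*n-1) (by omega) (by omega)
    rw [trip_mid hm₂l (by omega) (by omega),
      gci (show 2*n-1 - n = t₂.length + 1 by omega),
      trip_high hm₁l (by omega) (by omega)] at ka
    rw [mid_last' hm₂def] at ka
    have kb := key (2*n) (by omega) (by omega)
    rw [trip_high hm₂l (by omega) (by omega),
      trip_high hm₁l (by omega) (by omega)] at kb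
    exact hd₂q (ka.trans kb.symm)
end

section
/- Let A be a finite or countable alphabet with |A| ≥ 2, θ a bijective literal (anti)morphism on A*, and X ⊆ A* a thin θ-invariant code. If X is maximal among θ-invariant codes (no θ-invariant code properly contains X), then X is complete, i.e., F(X*) = A*. -/
open List

variable {α : Type*}

/-! ### Generic list utilities -/

lemma app_split {u v x z : List α} (h : u ++ v = x ++ z) (hle : u.length ≤ x.length) :
    ∃ t, x = u ++ t ∧ v = t ++ z := by
  rcases append_eq_append_iff.mp h with ⟨t, ht1, ht2⟩ | ⟨t, ht1, ht2⟩
  · exact ⟨t, ht1, ht2⟩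
  · have hlen := congrArg List.length ht1
    simp only [length_append] at hlen
    have ht : t = [] := by
      have : t.length = 0 := by omega
      exact List.length_eq_zero_iff.mp this
    subst ht
    simp at ht1 ht2
    exact ⟨[], by simp [ht1], by simp [ht2]⟩

lemma app_split_right {x z u v : List α} (h : x ++ z = u ++ v) (hle : z.length ≤ v.length) :
    ∃ t, v = t ++ z ∧ x = u ++ t := by
  have hlen := congrArg List.length h
  simp only [length_append] at hlen
  have hux : u.length ≤ x.length := by omega
  rcases app_split h.symm hux with ⟨t, h1, h2⟩
  exact ⟨t, h2, h1⟩

lemma map_eq_replicate {τ : α → α} (hτ : Function.Injective τ) :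
    ∀ {q : List α} {L : ℕ} {c : α}, q.map τ = replicate L c → 1 ≤ L →
    ∃ c₀, τ c₀ = c ∧ q = replicate L c₀ := by
  intro q
  induction q with
  | nil => intro L c h hL; rw [map_nil] at h
           have := congrArg List.length h; simp at this; omega
  | cons x q' ih =>
    intro L c h hL
    obtain ⟨L', rfl⟩ : ∃ L', L = L' + 1 := ⟨L - 1, by omega⟩
    rw [map_cons, replicate_succ] at h
    have hx : τ x = c := (List.cons.injEq _ _ _ _ ▸ h).1
    have hq' : q'.map τ = replicate L' c := (List.cons.injEq _ _ _ _ ▸ h).2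
    rcases Nat.eq_zero_or_pos L' with hL' | hL'
    · subst hL'
      have : q' = [] := by
        have := congrArg List.length hq'; simpa using this
      exact ⟨x, hx, by simp [this]⟩
    · obtain ⟨c₀, hc₀, hq⟩ := ih hq' hL'
      have : x = c₀ := hτ (by rw [hx, hc₀])
      exact ⟨x, hx, by rw [replicate_succ, hq, this]⟩

lemma pull_prefix {τ : α → α} (hτ : Function.Injective τ) {v : List α} {L : ℕ} {c : α}
    (h : replicate L c <+: v.map τ) (hL : 1 ≤ L) :
    ∃ c₀, τ c₀ = c ∧ replicate L c₀ <+: v := by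
  have htake : (v.map τ).take L = replicate L c := by
    have h2 := List.prefix_iff_eq_take.mp h
    rw [length_replicate] at h2
    exact h2.symm
  rw [← map_take] at htake
  obtain ⟨c₀, hc₀, hq⟩ := map_eq_replicate hτ htake hL
  exact ⟨c₀, hc₀, hq ▸ take_prefix L v⟩

lemma push_prefix (τ : α → α) {v : List α} {L : ℕ} {c : α} (h : replicate L c <+: v) :
    replicate L (τ c) <+: v.map τ := by
  obtain ⟨t, ht⟩ := h
  exact ⟨t.map τ, by rw [← map_replicate, ← map_append, ht]⟩

lemma suffix_last {c x : α} {u : List α} (h : [c] <:+ u ++ [x]) : c = x := by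
  obtain ⟨t, ht⟩ := h
  have := (append_inj' ht (by simp)).2
  simpa using this

lemma singleton_prefix_cons {c x : α} {r : List α} (h : [c] <+: x :: r) : c = x := by
  obtain ⟨t, ht⟩ := h
  simpa using (List.cons.injEq _ _ _ _ ▸ ht).1

lemma replicate_eq_append {L : ℕ} {c : α} {x y : List α} (h : replicate L c = x ++ y) :
    x = replicate x.length c ∧ y = replicate y.length c := by
  have hlen := congrArg List.length h
  simp only [length_replicate, length_append] at hlen
  have h1 : replicate (min x.length L) c = x := by
    rw [← take_replicate, h, take_left]
  have h2 : replicate (L - x.length) c = y := by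
    rw [← drop_replicate, h, drop_left]
  have hxl : min x.length L = x.length := by omega
  have hyl : L - x.length = y.length := by omega
  rw [hxl] at h1
  rw [hyl] at h2
  exact ⟨h1.symm, h2.symm⟩

lemma cons_replicate_append (x : α) (n : ℕ) (v : List α) :
    x :: (replicate n x ++ v) = replicate n x ++ (x :: v) := by
  induction n with
  | zero => simp
  | succ n ih => simp only [replicate_succ, cons_append, ih]

/-- no constant infix of length `L` -/
def NCI (L : ℕ) (v : List α) : Prop := ∀ c : α, ¬ (replicate L c <:+: v)

lemma nci_of_len {L : ℕ} {v : List α} (h : v.length < L) : NCI L v := by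
  intro c hc
  have := hc.length_le
  simp only [length_replicate] at this
  omega

lemma split_const {L : ℕ} {c : α} {u v : List α} (h : replicate L c <:+: u ++ v) :
    replicate L c <:+: u ∨ replicate L c <:+: v ∨ ([c] <:+ u ∧ [c] <+: v) := by
  obtain ⟨p, s, hps⟩ := h
  rw [append_assoc] at hps
  rcases append_eq_append_iff.mp hps with ⟨t, ht1, ht2⟩ | ⟨t, ht1, ht2⟩
  · -- ht1 : u = p ++ t, ht2 : replicate L c ++ s = t ++ v
    rcases append_eq_append_iff.mp ht2 with ⟨e, he1, he2⟩ | ⟨e, he1, he2⟩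
    · -- he1 : t = replicate L c ++ e, he2 : s = e ++ v
      left
      exact ⟨p, e, by rw [ht1, he1, append_assoc]⟩
    · -- he1 : replicate L c = t ++ e, he2 : v = e ++ s
      obtain ⟨hte, hee⟩ := replicate_eq_append he1
      rcases Nat.eq_zero_or_pos e.length with h0 | h1
      · have he : e = [] := List.length_eq_zero_iff.mp h0
        subst he
        simp only [append_nil] at he1
        left
        exact ⟨p, [], by simp [ht1, ← he1]⟩
      · rcases Nat.eq_zero_or_pos t.length with h0' | h1'
        · have ht : t = [] := List.length_eq_zero_iff.mp h0'
          subst ht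
          simp only [nil_append] at he1
          right; left
          exact ⟨[], s, by simp [he1, he2]⟩
        · right; right
          constructor
          · have hct : [c] <:+ t := by
              rw [hte]
              obtain ⟨t', ht'⟩ : ∃ t', t.length = t' + 1 := ⟨t.length - 1, by omega⟩
              rw [ht']
              exact ⟨replicate t' c, by rw [replicate_succ']⟩
            exact hct.trans ⟨p, ht1.symm⟩
          · have hce : [c] <+: e := by
              rw [hee]
              obtain ⟨e', he'⟩ : ∃ e', e.length = e' + 1 := ⟨e.length - 1, by omega⟩
              rw [he']
              exact ⟨replicate e' c, by simp [replicate_succ]⟩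
            exact hce.trans ⟨s, he2.symm⟩
  · -- ht1 : p = u ++ t, ht2 : v = t ++ (replicate L c ++ s)
    right; left
    exact ⟨t, s, by rw [ht2, append_assoc]⟩

lemma nci_append {L : ℕ} {u v : List α} (hu : NCI L u) (hv : NCI L v)
    (hx : ∀ c, [c] <:+ u → [c] <+: v → False) : NCI L (u ++ v) := by
  intro c hc
  rcases split_const hc with h | h | ⟨h1, h2⟩
  · exact hu c h
  · exact hv c h
  · exact hx c h1 h2

lemma singleton_suffix_append_replicate {c x : α} {u : List α} {A : ℕ} (hA : 1 ≤ A)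
    (h : [c] <:+ u ++ replicate A x) : c = x := by
  obtain ⟨A', rfl⟩ : ∃ A', A = A' + 1 := ⟨A - 1, by omega⟩
  rw [replicate_succ', ← append_assoc] at h
  exact suffix_last h

lemma singleton_suffix_replicate {c x : α} {A : ℕ} (hA : 1 ≤ A)
    (h : [c] <:+ replicate A x) : c = x := by
  have : [c] <:+ ([] : List α) ++ replicate A x := by simpa using h
  exact singleton_suffix_append_replicate hA this

lemma singleton_prefix_replicate_append {c x : α} {v : List α} {A : ℕ} (hA : 1 ≤ A)
    (h : [c] <+: replicate A x ++ v) : c = x := by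
  obtain ⟨A', rfl⟩ : ∃ A', A = A' + 1 := ⟨A - 1, by omega⟩
  rw [replicate_succ, cons_append] at h
  exact singleton_prefix_cons h

lemma singleton_prefix_replicate {c x : α} {A : ℕ} (hA : 1 ≤ A)
    (h : [c] <+: replicate A x) : c = x := by
  have : [c] <+: replicate A x ++ ([] : List α) := by simpa using h
  exact singleton_prefix_replicate_append hA this

lemma pref_rev_to_suffix {L : ℕ} {c : α} {v : List α} (h : replicate L c <+: v.reverse) :
    replicate L c <:+ v := by
  obtain ⟨t, ht⟩ := h
  refine ⟨t.reverse, ?_⟩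
  have := congrArg List.reverse ht
  rw [reverse_append, reverse_reverse, reverse_replicate] at this
  exact this

lemma drop_one_append {u v : List α} (hu : u ≠ []) : (u ++ v).drop 1 = u.drop 1 ++ v := by
  cases u with
  | nil => simp at hu
  | cons x t => simp

lemma infix_of_prefix_drop {u v : List α} {d : ℕ} (h : u <+: v.drop d) : u <:+: v :=
  h.isInfix.trans (drop_suffix d v).isInfix

/-! ### The word `y` and the overlap kernel -/

def Yword (a b : α) (w : List α) : List α :=
  replicate (w.length+5) a ++
    ([b] ++ w ++ [b] ++ replicate (w.length+3) a ++ replicate (w.length+4) b)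

section Yword

variable {a b : α} {w : List α}

lemma Yword_length : (Yword a b w).length = 4 * w.length + 14 := by
  simp only [Yword, length_append, length_replicate, length_cons, length_nil]; omega

lemma Yword_drop_one :
    (Yword a b w).drop 1 = replicate (w.length+4) a ++
      ([b] ++ w ++ [b] ++ replicate (w.length+3) a ++ replicate (w.length+4) b) := by
  rw [Yword, show w.length + 5 = (w.length + 4) + 1 by omega, replicate_succ]
  simp

lemma Yword_drop_two :
    (Yword a b w).drop 2 = replicate (w.length+3) a ++
      ([b] ++ w ++ [b] ++ replicate (w.length+3) a ++ replicate (w.length+4) b) := by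
  rw [Yword, show w.length + 5 = (w.length + 3) + 1 + 1 by omega, replicate_succ,
    replicate_succ]
  simp

lemma nci_yd1 (hab : a ≠ b) : NCI (w.length+5) ((Yword a b w).drop 1) := by
  rw [Yword_drop_one]
  have hB0 : ∀ c : α, [c] <+: ([b] ++ w ++ [b] ++ replicate (w.length+3) a ++
      replicate (w.length+4) b) → c = b := by
    intro c hc
    simp only [append_assoc, cons_append, nil_append] at hc
    exact singleton_prefix_cons hc
  apply nci_append (nci_of_len (by simp only [length_append, length_replicate, length_cons, length_nil]; omega))
  · -- NCI of the tail
    have e1 : ([b] ++ w ++ [b] ++ replicate (w.length+3) a ++ replicate (w.length+4) b)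
        = (([b] ++ w ++ [b]) ++ replicate (w.length+3) a) ++ replicate (w.length+4) b := by
      simp [append_assoc]
    rw [e1]
    apply nci_append
    · apply nci_append (nci_of_len (by simp only [length_append, length_replicate, length_cons, length_nil]; omega)) (nci_of_len (by simp only [length_append, length_replicate, length_cons, length_nil]; omega))
      intro c h1 h2
      have hc1 : c = b := suffix_last h1
      have hc2 : c = a := singleton_prefix_replicate (by omega) h2
      exact hab (hc2 ▸ hc1 ▸ rfl)
    · exact nci_of_len (by simp only [length_append, length_replicate, length_cons, length_nil]; omega)
    · intro c h1 h2
      have hc1 : c = a := singleton_suffix_append_replicate (by omega) h1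
      have hc2 : c = b := singleton_prefix_replicate (by omega) h2
      exact hab (hc1 ▸ hc2 ▸ rfl)
  · intro c h1 h2
    have hc1 : c = a := singleton_suffix_replicate (by omega) h1
    have hc2 : c = b := hB0 c h2
    exact hab (hc1 ▸ hc2 ▸ rfl)

lemma Yword_mid_eq :
    ((Yword a b w).drop 2).take (4 * w.length + 10)
      = replicate (w.length+3) a ++
        (([b] ++ w ++ [b] ++ replicate (w.length+3) a) ++ replicate (w.length+2) b) := by
  rw [Yword_drop_two]
  have e1 : replicate (w.length+3) a ++
      ([b] ++ w ++ [b] ++ replicate (w.length+3) a ++ replicate (w.length+4) b)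
      = (replicate (w.length+3) a ++ ([b] ++ w ++ [b] ++ replicate (w.length+3) a))
        ++ replicate (w.length+4) b := by
    simp [append_assoc]
  rw [e1]
  have hlen : (replicate (w.length+3) a ++
      ([b] ++ w ++ [b] ++ replicate (w.length+3) a)).length = 3 * w.length + 8 := by
    simp; omega
  have e2 : 4 * w.length + 10 =
      (replicate (w.length+3) a ++ ([b] ++ w ++ [b] ++ replicate (w.length+3) a)).length
      + (w.length + 2) := by
    rw [hlen]; omega
  rw [e2, take_append, take_replicate]
  have : min (w.length+2) (w.length+4) = w.length + 2 := by omega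
  rw [Nat.add_sub_cancel_left, this, take_of_length_le (Nat.le_add_right _ _)]
  simp [append_assoc]

lemma nci_mid (hab : a ≠ b) :
    NCI (w.length+4) (((Yword a b w).drop 2).take (4 * w.length + 10)) := by
  rw [Yword_mid_eq]
  apply nci_append (nci_of_len (by simp only [length_append, length_replicate, length_cons, length_nil]; omega))
  · apply nci_append
    · apply nci_append (nci_of_len (by simp only [length_append, length_replicate, length_cons, length_nil]; omega)) (nci_of_len (by simp only [length_append, length_replicate, length_cons, length_nil]; omega))
      intro c h1 h2
      have hc1 : c = b := by
        have : [c] <:+ (([b] ++ w) ++ [b]) := by simpa [append_assoc] using h1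
        exact suffix_last this
      have hc2 : c = a := singleton_prefix_replicate (by omega) h2
      exact hab (hc2 ▸ hc1 ▸ rfl)
    · exact nci_of_len (by simp only [length_append, length_replicate, length_cons, length_nil]; omega)
    · intro c h1 h2
      have hc1 : c = a := singleton_suffix_append_replicate (by omega) h1
      have hc2 : c = b := singleton_prefix_replicate (by omega) h2
      exact hab (hc1 ▸ hc2 ▸ rfl)
  · intro c h1 h2
    have hc1 : c = a := singleton_suffix_replicate (by omega) h1
    have hc2 : c = b := by
      have : [c] <+: (([b] ++ w ++ [b] ++ replicate (w.length+3) a)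
          ++ replicate (w.length+2) b) := h2
      simp only [append_assoc, cons_append, nil_append] at this
      exact singleton_prefix_cons this
    exact hab (hc1 ▸ hc2 ▸ rfl)

lemma NCF_P (hab : a ≠ b) {c : α} {d : ℕ} (hd : 1 ≤ d) :
    ¬ (replicate (w.length+5) c <+: (Yword a b w).drop d) := by
  intro h
  have hdd : (Yword a b w).drop d = ((Yword a b w).drop 1).drop (d-1) := by
    rw [drop_drop]; congr 1; omega
  rw [hdd] at h
  exact nci_yd1 hab c (infix_of_prefix_drop h)

lemma Yword_prefix_repP : replicate (w.length+5) a <+: Yword a b w :=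
  ⟨_, rfl⟩

lemma C1 (hab : a ≠ b) {τ : α → α} (hτ : Function.Injective τ) {d : ℕ} (hd : 1 ≤ d)
    (hdn : d + (w.length+6) ≤ 4*w.length+14)
    (heq : ((Yword a b w).drop d).map τ = (Yword a b w).take (4*w.length+14 - d)) :
    False := by
  have hpre : replicate (w.length+5) a <+: (Yword a b w).take (4*w.length+14 - d) :=
    List.prefix_take_iff.mpr ⟨Yword_prefix_repP, by simp only [length_replicate]; omega⟩
  rw [← heq] at hpre
  obtain ⟨c₀, -, hc₀⟩ := pull_prefix hτ hpre (by omega)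
  exact NCF_P hab hd hc₀

lemma C4 (hab : a ≠ b) (τ : α → α) {d : ℕ} (hd : 1 ≤ d)
    (hdn : d + (w.length+6) ≤ 4*w.length+14)
    (heq : ((Yword a b w).take (4*w.length+14 - d)).map τ = (Yword a b w).drop d) :
    False := by
  have hpre : replicate (w.length+5) a <+: (Yword a b w).take (4*w.length+14 - d) :=
    List.prefix_take_iff.mpr ⟨Yword_prefix_repP, by simp only [length_replicate]; omega⟩
  have := push_prefix τ hpre
  rw [heq] at this
  exact NCF_P hab hd this

lemma C3 (hab : a ≠ b) (τ : α → α) {d : ℕ} (hd : 1 ≤ d)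
    (hdn : d + (w.length+6) ≤ 4*w.length+14)
    (heq : ((Yword a b w).take (4*w.length+14 - d)).map τ
      = ((Yword a b w).take (4*w.length+14 - d)).reverse) :
    False := by
  set y := Yword a b w with hy
  have hpre : replicate (w.length+5) a <+: y.take (4*w.length+14 - d) :=
    List.prefix_take_iff.mpr ⟨Yword_prefix_repP, by simp only [length_replicate]; omega⟩
  have hp2 := push_prefix τ hpre
  rw [heq] at hp2
  have hsuf : replicate (w.length+5) (τ a) <:+ y.take (4*w.length+14 - d) :=
    pref_rev_to_suffix hp2
  obtain ⟨t0, ht0⟩ := hsuf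
  have hylen : y.length = 4*w.length+14 := Yword_length
  have ht0len : t0.length = (4*w.length+14 - d) - (w.length+5) := by
    have := congrArg List.length ht0
    simp only [length_append, length_replicate, length_take, hylen] at this
    omega
  have ht0ne : t0 ≠ [] := by
    intro h
    rw [h] at ht0len
    simp at ht0len
    omega
  have hysplit : y = t0 ++ (replicate (w.length+5) (τ a) ++ y.drop (4*w.length+14 - d)) := by
    conv_lhs => rw [← take_append_drop (4*w.length+14 - d) y]
    rw [← ht0, append_assoc]
  have : y.drop 1 = t0.drop 1 ++ (replicate (w.length+5) (τ a) ++ y.drop (4*w.length+14 - d)) := by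
    conv_lhs => rw [hysplit]
    exact drop_one_append ht0ne
  have hinf : replicate (w.length+5) (τ a) <:+: y.drop 1 :=
    ⟨t0.drop 1, y.drop (4*w.length+14 - d), by rw [this]; exact (append_assoc _ _ _)⟩
  exact nci_yd1 hab _ hinf

lemma C2 (hab : a ≠ b) {τ : α → α} (hτ : Function.Injective τ) {d : ℕ} (hd : 1 ≤ d)
    (hdn : d + (w.length+6) ≤ 4*w.length+14)
    (heq : ((Yword a b w).drop d).map τ = ((Yword a b w).drop d).reverse) :
    False := by
  set A := replicate (w.length+5) a ++ ([b] ++ w ++ [b] ++ replicate (w.length+2) a) with hA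
  have h0 : replicate (w.length+3) a = replicate (w.length+2) a ++ [a] := by
    rw [show (w.length+3:ℕ) = (w.length+2)+1 from rfl]
    exact replicate_succ'
  have hyA : Yword a b w = A ++ ([a] ++ replicate (w.length+4) b) := by
    rw [Yword, h0, hA]
    simp [append_assoc]
  have hAlen : A.length = 3*w.length + 9 := by
    rw [hA]; simp only [length_append, length_replicate, length_cons, length_nil]; omega
  have hdA : d ≤ A.length := by omega
  have hdrop : (Yword a b w).drop d = A.drop d ++ ([a] ++ replicate (w.length+4) b) := by
    rw [hyA, drop_append_of_le_length hdA]
  have hrev : ((Yword a b w).drop d).reverse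
      = replicate (w.length+4) b ++ ([a] ++ (A.drop d).reverse) := by
    rw [hdrop]
    simp [reverse_append, reverse_replicate, append_assoc]
  have hpre : replicate (w.length+4) b <+: ((Yword a b w).drop d).map τ := by
    rw [heq, hrev]; exact prefix_append _ _
  obtain ⟨c₀, hτc₀, hc₀⟩ := pull_prefix hτ hpre (by omega)
  by_cases hd2 : 2 ≤ d
  · have h1 : replicate (w.length+4) c₀ <+: ((Yword a b w).drop d).take (4*w.length+12 - d) :=
      List.prefix_take_iff.mpr ⟨hc₀, by simp only [length_replicate]; omega⟩
    have h2 : (((Yword a b w).drop 2).take (4*w.length+10)).drop (d-2)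
        = ((Yword a b w).drop d).take (4*w.length+12 - d) := by
      rw [drop_take, drop_drop]
      congr 1
      · omega
      · congr 1; omega
    rw [← h2] at h1
    exact nci_mid hab c₀ (infix_of_prefix_drop h1)
  · have hd1 : d = 1 := by omega
    subst hd1
    have hA1 : A.drop 1 = replicate (w.length+4) a ++ ([b] ++ w ++ [b] ++ replicate (w.length+2) a) := by
      rw [hA, show (w.length+5:ℕ) = (w.length+4)+1 from rfl, replicate_succ]
      simp
    have hs' : (Yword a b w).drop 1
        = replicate (w.length+4) a ++ ([b] ++ w ++ [b] ++ replicate (w.length+3) a ++ replicate (w.length+4) b) :=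
      Yword_drop_one
    have hrev1 : ((Yword a b w).drop 1).reverse
        = replicate (w.length+4) b ++ ([a] ++ (replicate (w.length+2) a ++ ([b] ++ (w.reverse ++ ([b] ++ replicate (w.length+4) a))))) := by
      rw [hrev, hA1]
      simp [reverse_append, reverse_replicate, append_assoc]
    rw [hrev1, hs', map_append, map_replicate] at heq
    have hT := (append_inj heq (by simp only [length_replicate])).2
    have hT2 : ([a] ++ (replicate (w.length+2) a ++ ([b] ++ (w.reverse ++ ([b] ++ replicate (w.length+4) a)))))
        = replicate (w.length+3) a ++ ([b] ++ (w.reverse ++ ([b] ++ replicate (w.length+4) a))) := by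
      rw [h0]
      simp [append_assoc, cons_replicate_append]
    rw [hT2] at hT
    have hpre2 : replicate (w.length+3) a <+: ([b] ++ w ++ [b] ++ replicate (w.length+3) a ++ replicate (w.length+4) b).map τ := by
      rw [hT]; exact prefix_append _ _
    obtain ⟨c₁, -, hc₁⟩ := pull_prefix hτ hpre2 (by omega)
    obtain ⟨r, hr⟩ := hc₁
    have hTsplit : [b] ++ w ++ [b] ++ replicate (w.length+3) a ++ replicate (w.length+4) b
        = (([b] ++ w ++ [b]) ++ [a]) ++ (replicate (w.length+2) a ++ replicate (w.length+4) b) := by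
      rw [h0]
      simp [append_assoc, cons_replicate_append]
    rw [hTsplit] at hr
    have hfirst := (append_inj hr.symm (by
      simp only [length_append, length_replicate, length_cons, length_nil]; omega)).1
    have h1 : replicate (w.length+3) c₁ = replicate (w.length+2) c₁ ++ [c₁] := by
      rw [show (w.length+3:ℕ) = (w.length+2)+1 from rfl]
      exact replicate_succ'
    rw [h1] at hfirst
    have hlast := (append_inj' hfirst (by simp)).2
    have hfst := (append_inj' hfirst (by simp)).1
    have hc1a : c₁ = a := by simpa using hlast.symm
    have hc1b : c₁ = b := by
      have hx : [b] ++ w ++ [b] = replicate (w.length+2) c₁ := hfst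
      have h2 : b :: (w ++ [b]) = c₁ :: replicate (w.length+1) c₁ := by
        rw [show (w.length+2:ℕ) = (w.length+1)+1 from rfl, replicate_succ] at hx
        simpa [append_assoc] using hx
      exact (List.cons.injEq _ _ _ _ ▸ h2).1.symm
    exact hab (hc1a ▸ hc1b ▸ rfl)

lemma overlap_kernel (hab : a ≠ b) {τ : α → α} (hτ : Function.Injective τ)
    {Y1 Y2 : List α} (h1 : Y1 = Yword a b w ∨ Y1 = (Yword a b w).reverse)
    (h2 : Y2 = Yword a b w ∨ Y2 = (Yword a b w).reverse)
    {d k : ℕ} (hd : 1 ≤ d) (hk : w.length + 6 ≤ k) (hdk : d + k = 4*w.length+14)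
    (heq : (Y1.drop d).map τ = Y2.take k) : False := by
  have hylen : (Yword a b w).length = 4*w.length+14 := Yword_length
  have hkd : k = 4*w.length+14 - d := by omega
  have hdn : d + (w.length+6) ≤ 4*w.length+14 := by omega
  have hrevtake : (Yword a b w).reverse.take k = ((Yword a b w).drop d).reverse := by
    rw [reverse_drop, hylen, hkd]
  have hrevdrop : (Yword a b w).reverse.drop d = ((Yword a b w).take k).reverse := by
    rw [reverse_take]
    congr 1
    omega
  rcases h1 with h1 | h1 <;> rcases h2 with h2 | h2
  · rw [h1, h2, hkd] at heq
    exact C1 hab hτ hd hdn heq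
  · rw [h1, h2, hrevtake] at heq
    exact C2 hab hτ hd hdn heq
  · rw [h1, h2, hrevdrop, map_reverse] at heq
    have heq2 : ((Yword a b w).take k).map τ = ((Yword a b w).take k).reverse := by
      have h3 := congrArg List.reverse heq
      simpa using h3
    rw [hkd] at heq2
    exact C3 hab τ hd hdn heq2
  · rw [h1, h2, hrevdrop, hrevtake, map_reverse] at heq
    have heq2 : ((Yword a b w).take k).map τ = (Yword a b w).drop d := by
      have h3 := congrArg List.reverse heq
      simpa using h3
    rw [hkd] at heq2
    exact C4 hab τ hd hdn heq2

end Yword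


/-! ### StarSet / Factors basics -/

lemma mem_starset_join {X : Set (List α)} {l : List (List α)} (h : ∀ u ∈ l, u ∈ X) :
    l.flatten ∈ StarSet X := ⟨l, h, rfl⟩

lemma factors_of_infix {X : Set (List α)} {u v : List α}
    (h : u <:+: v) (hv : v ∈ Factors (StarSet X)) : u ∈ Factors (StarSet X) := by
  obtain ⟨W, hW, p, s, hps⟩ := hv
  obtain ⟨p', s', hps'⟩ := h
  exact ⟨W, hW, p ++ p', s' ++ s, by rw [← hps, ← hps']; simp [append_assoc]⟩

lemma infix_join_mem_factors {X : Set (List α)} {u : List α} {l : List (List α)}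
    (hl : ∀ x ∈ l, x ∈ X) (h : u <:+: l.flatten) : u ∈ Factors (StarSet X) :=
  ⟨l.flatten, mem_starset_join hl, h⟩

lemma nil_mem_factors {X : Set (List α)} : ([] : List α) ∈ Factors (StarSet X) :=
  ⟨[], ⟨[], by simp, rfl⟩, [], [], by simp⟩

lemma nil_not_mem_of_code {X : Set (List α)} (h : IsCode X) : ([] : List α) ∉ X := by
  intro hmem
  have := h [[]] [] (by simpa using hmem) (by simp) (by simp)
  simp at this

/-! ### Codes: adjoining an orbit -/

lemma join_split (l1 : List (List α)) (z : List α) (l2 : List (List α)) :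
    (l1 ++ z :: l2).flatten = l1.flatten ++ (z ++ l2.flatten) := by
  simp

lemma first_orbit_split (O X : Set (List α)) :
    ∀ l : List (List α), (∀ u ∈ l, u ∈ X ∪ O) →
      (∀ u ∈ l, u ∈ X) ∨ ∃ l1 z l2, l = l1 ++ z :: l2 ∧ (∀ u ∈ l1, u ∈ X) ∧ z ∈ O
        ∧ (∀ u ∈ l2, u ∈ X ∪ O) := by
  intro l
  induction l with
  | nil => intro _; left; simp
  | cons x t ih =>
    intro h
    by_cases hx : x ∈ X
    · rcases ih (fun u hu => h u (by simp [hu])) with hall | ⟨l1, z, l2, ht, h1, h2, h3⟩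
      · left
        intro u hu
        rcases mem_cons.mp hu with rfl | hu
        · exact hx
        · exact hall u hu
      · right
        refine ⟨x :: l1, z, l2, by rw [ht]; simp, ?_, h2, h3⟩
        intro u hu
        rcases mem_cons.mp hu with rfl | hu
        · exact hx
        · exact h1 u hu
    · right
      have hx2 : x ∈ O := (h x (by simp)).resolve_left hx
      exact ⟨[], x, t, by simp, by simp, hx2, fun u hu => h u (by simp [hu])⟩

section CodeUnion

variable {X O : Set (List α)} {n P : ℕ}

lemma code_union_contra
    (hlen : ∀ z ∈ O, z.length = n)
    (hgood : ∀ z ∈ O, ∃ p u s, z = p ++ u ++ s ∧ P ≤ p.length ∧ P ≤ s.length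
      ∧ u ∉ Factors (StarSet X))
    (hker : ∀ z1 ∈ O, ∀ z2 ∈ O, ∀ g h t, z1 = g ++ h → z2 = h ++ t →
      P + 1 ≤ h.length → g ≠ [] → False)
    {l1 m1 l2 m2 : List (List α)} {z z' : List α}
    (hl1 : ∀ u ∈ l1, u ∈ X) (hz : z ∈ O) (hl2 : ∀ u ∈ l2, u ∈ X ∪ O)
    (hm1 : ∀ u ∈ m1, u ∈ X) (hz' : z' ∈ O)
    (heq : l1.flatten ++ (z ++ l2.flatten) = m1.flatten ++ (z' ++ m2.flatten))
    (hlt : l1.flatten.length < m1.flatten.length) : False := by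
  have znotF : ∀ zz ∈ O, zz ∉ Factors (StarSet X) := by
    intro zz hzz hmem
    obtain ⟨p, u, s, hzzu, -, -, hu⟩ := hgood zz hzz
    exact hu (factors_of_infix ⟨p, s, by rw [← hzzu]⟩ hmem)
  obtain ⟨g, hg1, hg2⟩ := app_split heq (le_of_lt hlt)
  have hgne : g ≠ [] := by
    intro h
    rw [h, append_nil] at hg1
    rw [hg1] at hlt
    exact lt_irrefl _ hlt
  have hgpos : 1 ≤ g.length := length_pos_iff.mpr hgne
  have hzn : z.length = n := hlen z hz
  have hz'n : z'.length = n := hlen z' hz'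
  by_cases hng : n ≤ g.length
  · obtain ⟨h', hh1, hh2⟩ := app_split hg2 (by omega)
    refine znotF z hz (infix_join_mem_factors hm1 ⟨l1.flatten, h', ?_⟩)
    rw [hg1, hh1]
    simp [append_assoc]
  · obtain ⟨h, hh1, hh2⟩ := app_split hg2.symm (by omega)
    -- hh1 : z = g ++ h, hh2 : z' ++ m2.flatten = h ++ l2.flatten
    have hklen : h.length + g.length = n := by
      have := congrArg List.length hh1
      simp only [length_append] at this
      omega
    have hk1 : 1 ≤ h.length := by omega
    obtain ⟨h₂, hi1, hi2⟩ := app_split hh2.symm (by omega)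
    -- hi1 : z' = h ++ h₂, hi2 : l2.flatten = h₂ ++ m2.flatten
    by_cases hkP : P + 1 ≤ h.length
    · exact hker z hz z' hz' g h h₂ hh1 hi1 hkP hgne
    · obtain ⟨pm, u, sm, hzdec, hpm, hsm, huF⟩ := hgood z' hz'
      have he : h ++ h₂ = pm ++ (u ++ sm) := by
        rw [← hi1, hzdec]
        simp [append_assoc]
      obtain ⟨c₁, hc1, hc2⟩ := app_split he (by omega)
      -- hc1 : pm = h ++ c₁, hc2 : h₂ = c₁ ++ (u ++ sm)
      have huinfix : u <:+: h₂ := ⟨c₁, sm, by rw [hc2]; simp [append_assoc]⟩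
      rcases first_orbit_split O X l2 hl2 with hall | ⟨l3, z'', l4, hl2eq, hl3, hz'', hl4⟩
      · have hpref : h₂ <:+: l2.flatten := ⟨[], m2.flatten, by rw [hi2]; simp⟩
        exact huF (infix_join_mem_factors hall (huinfix.trans hpref))
      · rw [hl2eq, join_split] at hi2
        -- hi2 : l3.flatten ++ (z'' ++ l4.flatten) = h₂ ++ m2.flatten
        by_cases hc3 : h₂.length ≤ l3.flatten.length
        · obtain ⟨t, ht1, ht2⟩ := app_split hi2.symm hc3
          exact huF (infix_join_mem_factors hl3 (huinfix.trans ⟨[], t, by rw [ht1]; simp⟩))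
        · obtain ⟨g₂, hg21, hg22⟩ := app_split hi2 (by omega)
          -- hg21 : h₂ = l3.flatten ++ g₂, hg22 : z'' ++ l4.flatten = g₂ ++ m2.flatten
          have hg2len : l3.flatten.length + g₂.length = h₂.length := by
            have := congrArg List.length hg21
            simp only [length_append] at this
            omega
          have hh2len : h.length + h₂.length = n := by
            have := congrArg List.length hi1
            simp only [length_append, hz'n] at this
            omega
          have hz''n : z''.length = n := hlen z'' hz''
          obtain ⟨h₃, hh31, hh32⟩ := app_split hg22.symm (by omega)
          -- hh31 : z'' = g₂ ++ h₃, hh32 : m2.flatten = h₃ ++ l4.flatten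
          by_cases hκ : P + 1 ≤ g₂.length
          · refine hker z' hz' z'' hz'' (h ++ l3.flatten) g₂ h₃ ?_ hh31 hκ ?_
            · rw [hi1, hg21, append_assoc]
            · intro hnil
              have := congrArg List.length hnil
              simp only [length_append, length_nil] at this
              omega
          · have he3 : l3.flatten ++ g₂ = (c₁ ++ u) ++ sm := by
              rw [← hg21, hc2]
              simp [append_assoc]
            obtain ⟨c₂, hsm2, hl3j⟩ := app_split_right he3 (by omega)
            exact huF (infix_join_mem_factors hl3 ⟨c₁, c₂, by rw [hl3j]⟩)

lemma code_union
    (hcode : IsCode X) (hn : 1 ≤ n)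
    (hlen : ∀ z ∈ O, z.length = n)
    (hgood : ∀ z ∈ O, ∃ p u s, z = p ++ u ++ s ∧ P ≤ p.length ∧ P ≤ s.length
      ∧ u ∉ Factors (StarSet X))
    (hker : ∀ z1 ∈ O, ∀ z2 ∈ O, ∀ g h t, z1 = g ++ h → z2 = h ++ t →
      P + 1 ≤ h.length → g ≠ [] → False) :
    IsCode (X ∪ O) := by
  have znotF : ∀ zz ∈ O, zz ∉ Factors (StarSet X) := by
    intro zz hzz hmem
    obtain ⟨p, u, s, hzzu, -, -, hu⟩ := hgood zz hzz
    exact hu (factors_of_infix ⟨p, s, by rw [← hzzu]⟩ hmem)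
  have hnilX : ([] : List α) ∉ X := nil_not_mem_of_code hcode
  have hne : ∀ u : List α, u ∈ X ∪ O → u ≠ [] := by
    rintro u (hu | hu) rfl
    · exact hnilX hu
    · have := hlen [] hu
      simp at this
      omega
  suffices H : ∀ N (l m : List (List α)), (∀ u ∈ l, u ∈ X ∪ O) → (∀ u ∈ m, u ∈ X ∪ O) →
      l.flatten = m.flatten → l.flatten.length ≤ N → l = m by
    intro l m hl hm hj
    exact H l.flatten.length l m hl hm hj le_rfl
  intro N
  induction N with
  | zero =>
    intro l m hl hm hj hN
    have hjl : l.flatten = [] := by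
      have : l.flatten.length = 0 := by omega
      exact List.length_eq_zero_iff.mp this
    have hl0 : l = [] := by
      cases l with
      | nil => rfl
      | cons x t =>
        exfalso
        have hx : x = [] := by
          have := List.flatten_eq_nil_iff.mp hjl
          exact this x (by simp)
        exact hne x (hl x (by simp)) hx
    have hjm : m.flatten = [] := by rw [← hj, hjl]
    have hm0 : m = [] := by
      cases m with
      | nil => rfl
      | cons x t =>
        exfalso
        have hx : x = [] := by
          have := List.flatten_eq_nil_iff.mp hjm
          exact this x (by simp)
        exact hne x (hm x (by simp)) hx
    rw [hl0, hm0]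
  | succ N ih =>
    intro l m hl hm hj hN
    rcases first_orbit_split O X l hl with halll | ⟨l1, z, l2, hleq, hl1, hz, hl2⟩
    · rcases first_orbit_split O X m hm with hallm | ⟨m1, z', m2, hmeq, hm1, hz', hm2⟩
      · exact hcode l m halll hallm hj
      · exfalso
        refine znotF z' hz' (infix_join_mem_factors halll ?_)
        rw [hj, hmeq, join_split]
        exact ⟨m1.flatten, m2.flatten, append_assoc _ _ _⟩
    · rcases first_orbit_split O X m hm with hallm | ⟨m1, z', m2, hmeq, hm1, hz', hm2⟩
      · exfalso
        refine znotF z hz (infix_join_mem_factors hallm ?_)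
        rw [← hj, hleq, join_split]
        exact ⟨l1.flatten, l2.flatten, append_assoc _ _ _⟩
      · rw [hleq, hmeq] at hj
        rw [join_split, join_split] at hj
        rcases lt_trichotomy l1.flatten.length m1.flatten.length with hlt | heqlen | hgt
        · exact absurd (code_union_contra hlen hgood hker hl1 hz hl2 hm1 hz' hj hlt) id
        · have h1 := append_inj hj heqlen
          have h2 := append_inj h1.2 (by rw [hlen z hz, hlen z' hz'])
          have hl1m1 : l1 = m1 := hcode l1 m1 hl1 hm1 h1.1
          have hl2m2 : l2 = m2 := by
            refine ih l2 m2 hl2 hm2 h2.2 ?_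
            rw [hleq, join_split] at hN
            simp only [length_append, hlen z hz] at hN
            omega
          rw [hleq, hmeq, hl1m1, hl2m2, h2.1]
        · exact absurd (code_union_contra hlen hgood hker hm1 hz' hm2 hl1 hz hj.symm hgt) id

end CodeUnion

/-! ### Literal (anti)morphisms: canonical form -/

lemma litanti_form {θ : List α → List α} (hθ : LitAnti θ) :
    ∃ σ : α → α, Function.Bijective σ ∧
      ((∀ v, θ v = v.map σ) ∨ (∀ v, θ v = (v.map σ).reverse)) := by
  obtain ⟨hbij, hlit, hmor⟩ := hθ
  choose σ hσ using hlit
  have hniltheta : θ [] = [] := by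
    rcases hmor with hm | ha
    · have h := hm [] []
      simp only [append_nil] at h
      have hl := congrArg List.length h
      simp only [length_append] at hl
      have : (θ []).length = 0 := by omega
      exact List.length_eq_zero_iff.mp this
    · exact ha.1
  have hform : (∀ v, θ v = v.map σ) ∨ (∀ v, θ v = (v.map σ).reverse) := by
    rcases hmor with hm | ha
    · left
      intro v
      induction v with
      | nil => simpa using hniltheta
      | cons x t iht =>
        have h := hm [x] t
        simp only [singleton_append] at h
        rw [h, iht, hσ x]
        simp
    · right
      intro v
      induction v with
      | nil => simpa using hniltheta
      | cons x t iht =>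
        have h := ha.2 [x] t
        simp only [singleton_append] at h
        rw [h, iht, hσ x]
        simp
  refine ⟨σ, ⟨?_, ?_⟩, hform⟩
  · intro a1 a2 h
    have h2 : θ [a1] = θ [a2] := by rw [hσ, hσ, h]
    have h3 := hbij.1 h2
    simpa using h3
  · intro c
    obtain ⟨v, hv⟩ := hbij.2 [c]
    have hvlen : v.length = 1 := by
      rcases hform with hf | hf <;>
      · rw [hf] at hv
        have := congrArg List.length hv
        simpa using this
    obtain ⟨x, rfl⟩ := List.length_eq_one_iff.mp hvlen
    refine ⟨x, ?_⟩
    have h4 : [σ x] = [c] := by rw [← hσ x, hv]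
    simpa using h4

/-! ### The map `Φ` -/

def Phi (σ' : α → α) (r : Bool) (v : List α) : List α :=
  cond r (v.map σ').reverse (v.map σ')

lemma Phi_length (σ' : α → α) (r : Bool) (v : List α) : (Phi σ' r v).length = v.length := by
  cases r <;> simp [Phi]

lemma Phi_inv {σ' ς' : α → α} (hinv : ∀ x, ς' (σ' x) = x) (r : Bool) (v : List α) :
    Phi ς' r (Phi σ' r v) = v := by
  have hcomp : ς' ∘ σ' = id := funext hinv
  cases r <;> simp [Phi, map_map, map_reverse, hcomp]

lemma F_step_map {X : Set (List α)} {σ' : α → α} (hX : ∀ x ∈ X, x.map σ' ∈ X) :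
    ∀ v ∈ Factors (StarSet X), v.map σ' ∈ Factors (StarSet X) := by
  rintro v ⟨W, ⟨l, hl, rfl⟩, p, s, hps⟩
  refine ⟨(l.map (List.map σ')).flatten, ⟨l.map (List.map σ'), ?_, rfl⟩,
    p.map σ', s.map σ', ?_⟩
  · intro u hu
    obtain ⟨x, hx, rfl⟩ := List.mem_map.mp hu
    exact hX x (hl x hx)
  · have hj : (l.map (List.map σ')).flatten = (l.flatten).map σ' := List.map_flatten.symm
    rw [hj, ← hps]
    simp [map_append]

lemma F_step_rev {X : Set (List α)} {σ' : α → α} (hX : ∀ x ∈ X, (x.map σ').reverse ∈ X) :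
    ∀ v ∈ Factors (StarSet X), (v.map σ').reverse ∈ Factors (StarSet X) := by
  rintro v ⟨W, ⟨l, hl, rfl⟩, p, s, hps⟩
  refine ⟨((l.map (fun x => (x.map σ').reverse)).reverse).flatten,
    ⟨(l.map (fun x => (x.map σ').reverse)).reverse, ?_, rfl⟩,
    (s.map σ').reverse, (p.map σ').reverse, ?_⟩
  · intro u hu
    simp only [mem_reverse, mem_map] at hu
    obtain ⟨x, hx, rfl⟩ := hu
    exact hX x (hl x hx)
  · have h1 : ((l.map (fun x => (x.map σ').reverse)).reverse).flatten
        = ((l.flatten).map σ').reverse := by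
      have e1 : (l.flatten).map σ' = (l.map (List.map σ')).flatten := List.map_flatten
      have e2 : ((l.map (List.map σ')).flatten).reverse
          = (((l.map (List.map σ')).map List.reverse).reverse).flatten :=
        List.reverse_flatten
      rw [e1, e2, map_map]
      rfl
    rw [h1, ← hps]
    simp [map_append, reverse_append, append_assoc]

lemma Phi_F {X : Set (List α)} {σ' : α → α} {r : Bool} (hX : ∀ x ∈ X, Phi σ' r x ∈ X) :
    ∀ v ∈ Factors (StarSet X), Phi σ' r v ∈ Factors (StarSet X) := by
  cases r
  · exact F_step_map hX
  · exact F_step_rev hX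

def GoodW (X : Set (List α)) (P : ℕ) (z : List α) : Prop :=
  ∃ p u s, z = p ++ u ++ s ∧ P ≤ p.length ∧ P ≤ s.length ∧ u ∉ Factors (StarSet X)

lemma Phi_good {X : Set (List α)} {P : ℕ} {σ' : α → α} {r : Bool}
    (hmem : ∀ u : List α, Phi σ' r u ∈ Factors (StarSet X) → u ∈ Factors (StarSet X))
    {z : List α} (hz : GoodW X P z) : GoodW X P (Phi σ' r z) := by
  obtain ⟨p, u, s, rfl, hp, hs, hu⟩ := hz
  cases r
  · exact ⟨p.map σ', u.map σ', s.map σ', by simp [Phi, map_append],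
      by simpa using hp, by simpa using hs, fun hF => hu (hmem u hF)⟩
  · exact ⟨(s.map σ').reverse, (u.map σ').reverse, (p.map σ').reverse,
      by simp [Phi, map_append, reverse_append, append_assoc],
      by simpa using hs, by simpa using hp, fun hF => hu (hmem u hF)⟩

lemma Phi_form {σ' : α → α} (hbij' : Function.Bijective σ') {r : Bool} {y z : List α}
    (hz : ∃ τ : α → α, Function.Bijective τ ∧ (z = y.map τ ∨ z = y.reverse.map τ)) :
    ∃ τ : α → α, Function.Bijective τ ∧
      (Phi σ' r z = y.map τ ∨ Phi σ' r z = y.reverse.map τ) := by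
  obtain ⟨τ, hτ, hcase | hcase⟩ := hz <;> subst hcase <;> cases r
  · exact ⟨σ' ∘ τ, hbij'.comp hτ, Or.inl (by simp [Phi, map_map])⟩
  · exact ⟨σ' ∘ τ, hbij'.comp hτ, Or.inr (by simp [Phi, map_map, map_reverse])⟩
  · exact ⟨σ' ∘ τ, hbij'.comp hτ, Or.inr (by simp [Phi, map_map])⟩
  · exact ⟨σ' ∘ τ, hbij'.comp hτ, Or.inl (by simp [Phi, map_map, map_reverse])⟩

/-! ### Orbits -/

lemma orbit_pred {θ θi : List α → List α} (hli : ∀ v, θi (θ v) = v)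
    {Pd : List α → Prop} (hstep : ∀ z, Pd z → Pd (θ z)) (hstepi : ∀ z, Pd z → Pd (θi z))
    {y : List α} (hy : Pd y) : ∀ z ∈ OrbitZ θ y, Pd z := by
  have hfwd : ∀ i, Pd (θ^[i] y) := by
    intro i
    induction i with
    | zero => simpa using hy
    | succ i ih => rw [Function.iterate_succ_apply']; exact hstep _ ih
  have hbwd : ∀ i, Pd (θi^[i] y) := by
    intro i
    induction i with
    | zero => simpa using hy
    | succ i ih => rw [Function.iterate_succ_apply']; exact hstepi _ ih
  rintro z ⟨i, hi | hi⟩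
  · rw [← hi]; exact hfwd i
  · have hz : z = θi^[i] y := by
      rw [← hi]
      exact ((Function.LeftInverse.iterate hli i) z).symm
    rw [hz]; exact hbwd i

lemma orbit_invariant {θ θi : List α → List α} (hli : ∀ v, θi (θ v) = v)
    (hri : ∀ v, θ (θi v) = v) (y : List α) : θ '' (OrbitZ θ y) = OrbitZ θ y := by
  ext z
  constructor
  · rintro ⟨u, ⟨i, hi | hi⟩, rfl⟩
    · exact ⟨i+1, Or.inl (by rw [Function.iterate_succ_apply', hi])⟩
    · cases i with
      | zero =>
        simp only [Function.iterate_zero, id_eq] at hi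
        exact ⟨1, Or.inl (by rw [hi]; simp)⟩
      | succ i =>
        refine ⟨i, Or.inr ?_⟩
        rw [← Function.iterate_succ_apply]
        exact hi
  · intro hz
    refine ⟨θi z, ?_, hri z⟩
    rcases hz with ⟨i, hi | hi⟩
    · cases i with
      | zero =>
        simp only [Function.iterate_zero, id_eq] at hi
        exact ⟨1, Or.inr (by simp [← hi, hri])⟩
      | succ i =>
        refine ⟨i, Or.inl ?_⟩
        rw [← hi, Function.iterate_succ_apply']
        rw [hli]
    · refine ⟨i+1, Or.inr ?_⟩
      rw [Function.iterate_succ_apply, hri]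
      exact hi

/-! ### Main theorem -/

theorem stmt8 [Countable α] (hA : ∃ a b : α, a ≠ b)
    (θ : List α → List α) (hθ : LitAnti θ)
    (X : Set (List α)) (hthin : Thin X) (hcode : IsCode X)
    (hinv : Invariant θ X)
    (hmax : ∀ Y : Set (List α), IsCode Y → Invariant θ Y → X ⊆ Y → Y = X) :
    Complete X := by
  by_contra hC
  obtain ⟨w, hw⟩ : ∃ w, w ∉ Factors (StarSet X) := by
    by_contra h
    push_neg at h
    exact hC (Set.eq_univ_of_forall h)
  obtain ⟨a, b, hab⟩ := hA
  obtain ⟨σ, hσbij, hform⟩ := litanti_form hθ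
  obtain ⟨ς, hςσ, hσς⟩ := Function.bijective_iff_has_inverse.mp hσbij
  have hςbij : Function.Bijective ς :=
    Function.bijective_iff_has_inverse.mpr ⟨σ, hσς, hςσ⟩
  obtain ⟨r, hθr⟩ : ∃ r : Bool, ∀ v, θ v = Phi σ r v := by
    rcases hform with hf | hf
    · exact ⟨false, fun v => by simpa [Phi] using hf v⟩
    · exact ⟨true, fun v => by simpa [Phi] using hf v⟩
  set θi : List α → List α := Phi ς r with hθi
  have hli : ∀ v, θi (θ v) = v := by
    intro v
    rw [hθr]
    exact Phi_inv hςσ r v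
  have hri : ∀ v, θ (θi v) = v := by
    intro v
    rw [hθr]
    exact Phi_inv hσς r v
  have hXim : θ '' X = X := hinv
  have hXθ : ∀ x ∈ X, Phi σ r x ∈ X := by
    intro x hx
    rw [← hθr x, ← hXim]
    exact ⟨x, hx, rfl⟩
  have hXθi : ∀ x ∈ X, Phi ς r x ∈ X := by
    intro x hx
    rw [← hXim] at hx
    obtain ⟨x₀, hx₀, rfl⟩ := hx
    rw [hθr, Phi_inv hςσ r x₀]
    exact hx₀
  have hFθ := Phi_F hXθ
  have hFθi := Phi_F hXθi
  have hmemθ : ∀ u : List α, Phi σ r u ∈ Factors (StarSet X) → u ∈ Factors (StarSet X) := by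
    intro u hu
    have := hFθi _ hu
    rwa [Phi_inv hςσ r u] at this
  have hmemθi : ∀ u : List α, Phi ς r u ∈ Factors (StarSet X) → u ∈ Factors (StarSet X) := by
    intro u hu
    have := hFθ _ hu
    rwa [Phi_inv hσς r u] at this
  have hwne : w ≠ [] := by
    rintro rfl
    exact hw nil_mem_factors
  set y : List α := Yword a b w with hy
  set O : Set (List α) := OrbitZ θ y with hO
  set Pm : ℕ := w.length + 5 with hPm
  set Pd : List α → Prop := fun z => z.length = y.length ∧ GoodW X Pm z ∧
    ∃ τ : α → α, Function.Bijective τ ∧ (z = y.map τ ∨ z = y.reverse.map τ) with hPd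
  have hyGood : GoodW X Pm y := by
    refine ⟨replicate (w.length+5) a ++ [b], w,
      [b] ++ replicate (w.length+3) a ++ replicate (w.length+4) b, ?_, ?_, ?_, hw⟩
    · rw [hy, Yword]
      simp [append_assoc]
    · simp only [length_append, length_replicate, length_cons, length_nil, hPm]
      omega
    · simp only [length_append, length_replicate, length_cons, length_nil, hPm]
      omega
  have hPdy : Pd y := by
    refine ⟨rfl, hyGood, id, Function.bijective_id, Or.inl ?_⟩
    simp
  have hstep : ∀ z, Pd z → Pd (θ z) := by
    intro z hz
    obtain ⟨h1, h2, h3⟩ := hz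
    rw [hθr]
    exact ⟨by rw [Phi_length]; exact h1, Phi_good hmemθ h2, Phi_form hσbij h3⟩
  have hstepi : ∀ z, Pd z → Pd (θi z) := by
    intro z hz
    obtain ⟨h1, h2, h3⟩ := hz
    rw [hθi]
    exact ⟨by rw [Phi_length]; exact h1, Phi_good hmemθi h2, Phi_form hςbij h3⟩
  have hOrb : ∀ z ∈ O, Pd z := orbit_pred hli hstep hstepi hPdy
  have hylen : y.length = 4 * w.length + 14 := Yword_length
  have hlenO : ∀ z ∈ O, z.length = 4 * w.length + 14 := by
    intro z hz
    rw [(hOrb z hz).1, hylen]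
  have hgoodO : ∀ z ∈ O, ∃ p u s, z = p ++ u ++ s ∧ Pm ≤ p.length ∧ Pm ≤ s.length
      ∧ u ∉ Factors (StarSet X) := fun z hz => (hOrb z hz).2.1
  have hkerO : ∀ z1 ∈ O, ∀ z2 ∈ O, ∀ g h t, z1 = g ++ h → z2 = h ++ t →
      Pm + 1 ≤ h.length → g ≠ [] → False := by
    intro z1 hz1 z2 hz2 g h t hgh hht hPh hgne
    obtain ⟨τ1, hτ1, hf1⟩ := (hOrb z1 hz1).2.2
    obtain ⟨τ2, hτ2, hf2⟩ := (hOrb z2 hz2).2.2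
    obtain ⟨τ2i, hl2, hr2⟩ := Function.bijective_iff_has_inverse.mp hτ2
    have hτ2i_inj : Function.Injective τ2i := hr2.injective
    have hlen1 : z1.length = 4*w.length+14 := hlenO z1 hz1
    have hdk : g.length + h.length = 4*w.length+14 := by
      have := congrArg List.length hgh
      simp only [length_append] at this
      omega
    have hdpos : 1 ≤ g.length := length_pos_iff.mpr hgne
    have hk : w.length + 6 ≤ h.length := by omega
    have key : ∀ Y1 Y2 : List α,
        (Y1 = Yword a b w ∨ Y1 = (Yword a b w).reverse) →
        (Y2 = Yword a b w ∨ Y2 = (Yword a b w).reverse) →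
        z1 = Y1.map τ1 → z2 = Y2.map τ2 → False := by
      intro Y1 Y2 hY1 hY2 he1 he2
      have hh1 : h = (Y1.drop g.length).map τ1 := by
        have hzd : h = z1.drop g.length := by rw [hgh, drop_left]
        rw [hzd, he1, ← map_drop]
      have hh2 : h = (Y2.take h.length).map τ2 := by
        have hzt : h = z2.take h.length := by rw [hht, take_left]
        conv_lhs => rw [hzt]
        rw [he2, ← map_take]
      have heq2 : (Y1.drop g.length).map τ1 = (Y2.take h.length).map τ2 := by
        rw [← hh1, ← hh2]
      have heq3 : (Y1.drop g.length).map (τ2i ∘ τ1) = Y2.take h.length := by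
        have h4 := congrArg (List.map τ2i) heq2
        rw [map_map, map_map] at h4
        have hid : τ2i ∘ τ2 = id := funext hl2
        rw [hid, map_id] at h4
        exact h4
      exact overlap_kernel hab (hτ2i_inj.comp hτ1.1) hY1 hY2 hdpos hk hdk heq3
    rcases hf1 with he1 | he1 <;> rcases hf2 with he2 | he2
    · exact key y y (Or.inl hy) (Or.inl hy) he1 he2
    · exact key y y.reverse (Or.inl hy) (Or.inr (by rw [hy])) he1 he2
    · exact key y.reverse y (Or.inr (by rw [hy])) (Or.inl hy) he1 he2
    · exact key y.reverse y.reverse (Or.inr (by rw [hy])) (Or.inr (by rw [hy])) he1 he2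
  have hcodeY : IsCode (X ∪ O) :=
    code_union hcode (by omega : 1 ≤ 4*w.length+14) hlenO hgoodO hkerO
  have hinvY : Invariant θ (X ∪ O) := by
    show θ '' (X ∪ O) = X ∪ O
    rw [Set.image_union, hXim, hO, orbit_invariant hli hri y]
  have hYeq := hmax (X ∪ O) hcodeY hinvY Set.subset_union_left
  have hyO : y ∈ O := ⟨0, Or.inl rfl⟩
  have hyX : y ∈ X := by
    rw [← hYeq]
    exact Set.mem_union_right X hyO
  have hyF : y ∈ Factors (StarSet X) :=
    ⟨y, ⟨[y], by simpa using hyX, by simp⟩, [], [], by simp⟩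
  refine hw (factors_of_infix ?_ hyF)
  exact ⟨replicate (w.length+5) a ++ [b],
    [b] ++ replicate (w.length+3) a ++ replicate (w.length+4) b,
    by rw [hy, Yword]; simp [append_assoc]⟩
end
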